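/- For all k ∈ {1,2,3} and l ∈ {0,1}, the following identity holds in H: z^k·u·s·u·t^l = c·z^k·u·s·t^l + a·d·z^k·t^l + b·c·d·z^k·s⁻¹·u⁻¹·t^l + b·d²·z^{k−1}·s·t·u²·s·t^{l+1}. -/
import Mathlib


noncomputable section

open scoped TensorProduct

/-- The Laurent polynomial ring `ℤ[a, b, b⁻¹, c, d, d⁻¹]`, realised as the monoid algebra of
`ℕ × ℕ × ℤ × ℤ` over `ℤ`; the four coordinates record the exponents of `a`, `c`, `b`, `d`
respectively (`b` and `d` are invertible, so their exponents range over all of `ℤ`). -/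
abbrev Rr : Type := AddMonoidAlgebra ℤ (ℕ × ℕ × ℤ × ℤ)

namespace G13

/-- The indeterminate `a`. -/
def pa : Rr := AddMonoidAlgebra.single (1, 0, 0, 0) 1
/-- The indeterminate `c`. -/
def pc : Rr := AddMonoidAlgebra.single (0, 1, 0, 0) 1
/-- The invertible indeterminate `b`. -/
def pb : Rr := AddMonoidAlgebra.single (0, 0, 1, 0) 1
/-- The invertible indeterminate `d`. -/
def pd : Rr := AddMonoidAlgebra.single (0, 0, 0, 1) 1
/-- `b⁻¹`. -/
def pbInv : Rr := AddMonoidAlgebra.single (0, 0, -1, 0) 1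
/-- `d⁻¹`. -/
def pdInv : Rr := AddMonoidAlgebra.single (0, 0, 0, -1) 1

def fS : FreeAlgebra Rr (Fin 3) := FreeAlgebra.ι Rr 0
def fT : FreeAlgebra Rr (Fin 3) := FreeAlgebra.ι Rr 1
def fU : FreeAlgebra Rr (Fin 3) := FreeAlgebra.ι Rr 2

/-- The defining relations of the generic Hecke algebra of `G₁₃`:
`tust = ustu`, `stust = ustus`, `s² = a·s + b`, `t² = c·t + d`, `u² = c·u + d`. -/
inductive Rel : FreeAlgebra Rr (Fin 3) → FreeAlgebra Rr (Fin 3) → Prop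
  | braid1 : Rel (fT * fU * fS * fT) (fU * fS * fT * fU)
  | braid2 : Rel (fS * fT * fU * fS * fT) (fU * fS * fT * fU * fS)
  | relS : Rel (fS * fS)
      (algebraMap Rr (FreeAlgebra Rr (Fin 3)) pa * fS + algebraMap Rr (FreeAlgebra Rr (Fin 3)) pb)
  | relT : Rel (fT * fT)
      (algebraMap Rr (FreeAlgebra Rr (Fin 3)) pc * fT + algebraMap Rr (FreeAlgebra Rr (Fin 3)) pd)
  | relU : Rel (fU * fU)
      (algebraMap Rr (FreeAlgebra Rr (Fin 3)) pc * fU + algebraMap Rr (FreeAlgebra Rr (Fin 3)) pd)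

/-- The generic Hecke algebra of `G₁₃`. -/
abbrev H := RingQuot Rel

/-- The generator `s` of `H`. -/
def s : H := RingQuot.mkAlgHom Rr Rel fS
/-- The generator `t` of `H`. -/
def t : H := RingQuot.mkAlgHom Rr Rel fT
/-- The generator `u` of `H`. -/
def u : H := RingQuot.mkAlgHom Rr Rel fU

/-- The central element `z = (stu)³`. -/
def z : H := (s * t * u) ^ 3

/-- Scalars of `Rr` viewed inside `H`. -/
def sc : Rr → H := algebraMap Rr H

/-- The twelve elements `E₁, …, E₁₂`: `1, u, s, ts, su, us, tu, tsu, tus, sts, stu, uts`. -/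
def E : Fin 12 → H :=
  ![1, u, s, t * s, s * u, u * s, t * u, t * s * u, t * u * s, s * t * s, s * t * u, u * t * s]

/-- The family `B₁₃ = (b₁, …, b₉₆)`, indexed here by `Fin 96` (so `B i = b_{i+1}`):
`b_{24k+12l+m} = z^k · E_m · t^l` for `k ∈ {0,…,3}`, `l ∈ {0,1}`, `m ∈ {1,…,12}`. -/
def B : Fin 96 → H := fun i =>
  z ^ (i.val / 24) * E ⟨i.val % 12, by omega⟩ * t ^ (i.val / 12 % 2)

/-- The inverse of the generator `s`: `s⁻¹ = b⁻¹·s − a·b⁻¹·1`. -/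
def sInv : H := sc pbInv * s - sc (pa * pbInv)
/-- The inverse of the generator `t`: `t⁻¹ = d⁻¹·t − c·d⁻¹·1`. -/
def tInv : H := sc pdInv * t - sc (pc * pdInv)
/-- The inverse of the generator `u`: `u⁻¹ = d⁻¹·u − c·d⁻¹·1`. -/
def uInv : H := sc pdInv * u - sc (pc * pdInv)

/-- Integer powers of `t`: `tP n = tⁿ` for `n ≥ 0`, and `tP n = (t⁻¹)^(−n)` for `n < 0`. -/
def tP : ℤ → H := fun n => if 0 ≤ n then t ^ n.toNat else tInv ^ (-n).toNat

lemma sc_mul (r r' : Rr) : sc (r * r') = sc r * sc r' := map_mul (algebraMap Rr H) r r'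
lemma mul_sc' (r : Rr) (x : H) : x * sc r = sc r * x := (Algebra.commutes r x).symm
lemma mul_sc (r : Rr) (x y : H) : x * (sc r * y) = sc r * (x * y) := by
  rw [← mul_assoc, mul_sc', mul_assoc]
lemma sc_sc (r1 r2 : Rr) (x : H) : sc r1 * (sc r2 * x) = sc (r1 * r2) * x := by
  rw [← mul_assoc, ← sc_mul]

lemma mulSub (x y w : H) : x * (y - w) = x * y - x * w := mul_sub x y w
lemma scOne : sc 1 = 1 := map_one (algebraMap Rr H)

lemma relU' : u * u = sc pc * u + sc pd := by
  have h := RingQuot.mkAlgHom_rel Rr Rel.relU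
  simpa only [map_mul, map_add, AlgHom.commutes, u, sc] using h
lemma relS' : s * s = sc pa * s + sc pb := by
  have h := RingQuot.mkAlgHom_rel Rr Rel.relS
  simpa only [map_mul, map_add, AlgHom.commutes, s, sc] using h
lemma braid2' : s * t * u * s * t = u * s * t * u * s := by
  have h := RingQuot.mkAlgHom_rel Rr Rel.braid2
  simpa only [map_mul, s, t, u] using h
lemma pdpd : pd * pdInv = 1 := by
  rw [pd, pdInv, AddMonoidAlgebra.single_mul_single]
  norm_num [Prod.mk_add_mk]
  exact AddMonoidAlgebra.one_def.symm
lemma pbpb : pb * pbInv = 1 := by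
  rw [pb, pbInv, AddMonoidAlgebra.single_mul_single]
  norm_num [Prod.mk_add_mk]
  exact AddMonoidAlgebra.one_def.symm

lemma u_uInv : u * uInv = 1 := by
  have h : u * uInv = sc pdInv * (u * u) - sc (pc * pdInv) * u := by
    rw [uInv, mulSub, mul_sc, mul_sc']
  rw [h, relU', mul_add, sc_sc, ← sc_mul, mul_comm pdInv pc, mul_comm pdInv pd, pdpd, scOne]
  abel

lemma s_sInv : s * sInv = 1 := by
  have h : s * sInv = sc pbInv * (s * s) - sc (pa * pbInv) * s := by
    rw [sInv, mulSub, mul_sc, mul_sc']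
  rw [h, relS', mul_add, sc_sc, ← sc_mul, mul_comm pbInv pa, mul_comm pbInv pb, pbpb, scOne]
  abel

lemma u_eq : u = sc pd * uInv + sc pc := by
  rw [uInv, mulSub, sc_sc, pdpd, scOne, one_mul, ← sc_mul, mul_left_comm, pdpd, mul_one]
  abel

lemma s_eq : s = sc pb * sInv + sc pa := by
  rw [sInv, mulSub, sc_sc, pbpb, scOne, one_mul, ← sc_mul, mul_left_comm, pbpb, mul_one]
  abel

lemma key : z * uInv * sInv * uInv = s * t * u ^ 2 * s * t := by
  have h1 : z * uInv * sInv * uInv = (s*t*u)*(s*t*u*s*t)*(u*uInv)*sInv*uInv := by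
    rw [z]; noncomm_ring
  rw [u_uInv, mul_one, braid2'] at h1
  have h2 : (s*t*u)*(u*s*t*u*s)*sInv*uInv = (s*t*u)*(u*s*t*u)*(s*sInv)*uInv := by noncomm_ring
  rw [s_sInv, mul_one] at h2
  have h3 : (s*t*u)*(u*s*t*u)*uInv = (s*t*u)*(u*s*t)*(u*uInv) := by noncomm_ring
  rw [u_uInv, mul_one] at h3
  rw [h1, h2, h3]; noncomm_ring

lemma main : z * u * s * u = sc pc * (z*u*s) + sc (pa*pd) * z +
    sc (pb*pc*pd) * (z*sInv*uInv) + sc (pb*pd^2) * (s*t*u^2*s*t) := by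
  have A : z*u*s*u = sc pd * (z*u*s*uInv) + sc pc * (z*u*s) := by
    nth_rewrite 2 [u_eq]
    simp only [mul_add, mul_sc, mul_sc']
  have B : z*u*s*uInv = sc pb*(z*u*sInv*uInv) + sc pa * z := by
    nth_rewrite 1 [s_eq]
    simp only [mul_add, add_mul, mul_sc, mul_sc', mul_assoc, u_uInv, mul_one]
  have C : z*u*sInv*uInv = sc pd*(z*uInv*sInv*uInv) + sc pc*(z*sInv*uInv) := by
    nth_rewrite 1 [u_eq]
    simp only [mul_add, add_mul, mul_sc, mul_sc', mul_assoc]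
  rw [A, B, C, key]
  simp only [mul_add, sc_sc]
  rw [show pd*(pb*pd) = pb*pd^2 by ring, show pd*(pb*pc) = pb*pc*pd by ring,
      show pd*pa = pa*pd by ring]
  abel

lemma gen (m : ℕ) (w : H) :
    z^(m+1)*u*s*u*w = sc pc * (z^(m+1)*u*s*w) + sc (pa*pd)*(z^(m+1)*w) +
      sc (pb*pc*pd) * (z^(m+1)*sInv*uInv*w) + sc (pb*pd^2) * (z^m*s*t*u^2*s*(t*w)) := by
  have h1 : z^(m+1)*u*s*u*w = z^m * (z*u*s*u) * w := by rw [pow_succ]; noncomm_ring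
  rw [h1, main]
  simp only [mul_add, add_mul, mul_sc, mul_sc', mul_assoc, pow_succ, pow_zero, one_mul]

/-- **special case 14.** For `k ∈ {1,2,3}`, `l ∈ {0,1}`:
`z^k·usu·t^l = c·z^k·us·t^l + ad·z^k·t^l + bcd·z^k·s⁻¹u⁻¹·t^l + bd²·z^{k−1}·stu²s·t^{l+1}`. -/
theorem stmt12 : ∀ k ∈ ({1, 2, 3} : Set ℕ), ∀ l ∈ ({0, 1} : Set ℤ),
    z ^ k * u * s * u * tP l =
      sc pc * (z ^ k * u * s * tP l) + sc (pa * pd) * (z ^ k * tP l) +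
        sc (pb * pc * pd) * (z ^ k * sInv * uInv * tP l) +
        sc (pb * pd ^ 2) * (z ^ (k - 1) * s * t * u ^ 2 * s * tP (l + 1)) := by
  intro k hk l hl
  simp only [Set.mem_insert_iff, Set.mem_singleton_iff] at hk hl
  have hT0 : tP 0 = 1 := by norm_num [tP]
  have hT1 : tP 1 = t := by norm_num [tP]
  have hT2 : tP 2 = t * t := by norm_num [tP]; rw [show Int.toNat 2 = 2 from rfl, pow_two]
  obtain rfl | rfl | rfl := hk <;> obtain rfl | rfl := hl
  · simpa [hT0, hT1, mul_assoc] using gen 0 1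
  · simpa [hT1, hT2, mul_assoc] using gen 0 t
  · simpa [hT0, hT1, mul_assoc] using gen 1 1
  · simpa [hT1, hT2, mul_assoc] using gen 1 t
  · simpa [hT0, hT1, mul_assoc] using gen 2 1
  · simpa [hT1, hT2, mul_assoc] using gen 2 t

end G13
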